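/- (Thom's Lemma, univariate case) Let p be a real univariate polynomial of degree d, and let σ : Fin (d+1) → ℝ be a sign choice with values in {-1, 0, 1}. Then the set {x : ℝ | ∀ i ≤ d, sign of the i-th derivative of p at x equals σ i} is either empty, a singleton, or an open interval (i.e., it is a convex subset of ℝ that, if it contains more than one point, is open). -/

import Mathlib

lemma real_sign_eq_one_iff {r : ℝ} : Real.sign r = 1 ↔ 0 < r := by
  constructor
  · intro h
    rcases lt_trichotomy r 0 with h1 | h1 | h1
    · rw [Real.sign_of_neg h1] at h; norm_num at h
    · rw [h1, Real.sign_zero] at h; norm_num at h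
    · exact h1
  · exact Real.sign_of_pos

lemma real_sign_eq_neg_one_iff {r : ℝ} : Real.sign r = -1 ↔ r < 0 := by
  constructor
  · intro h
    rcases lt_trichotomy r 0 with h1 | h1 | h1
    · exact h1
    · rw [h1, Real.sign_zero] at h; norm_num at h
    · rw [Real.sign_of_pos h1] at h; norm_num at h
  · exact Real.sign_of_neg

lemma thom_key (C : Set ℝ) (hconv : Convex ℝ C) (hop : ¬ C.Subsingleton → IsOpen C)
    (p : Polynomial ℝ) (c s : ℝ) (hc : ∀ x ∈ C, Real.sign (p.derivative.eval x) = c) :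
    Convex ℝ {x | x ∈ C ∧ Real.sign (p.eval x) = s} ∧
    (¬ {x | x ∈ C ∧ Real.sign (p.eval x) = s}.Subsingleton →
      IsOpen {x | x ∈ C ∧ Real.sign (p.eval x) = s}) := by
  set T := {x | x ∈ C ∧ Real.sign (p.eval x) = s} with hT
  have hTC : T ⊆ C := fun x hx => hx.1
  by_cases hCs : C.Subsingleton
  · have hTs : T.Subsingleton := hCs.anti hTC
    exact ⟨hTs.convex, fun h => absurd hTs h⟩
  · have hCo : IsOpen C := hop hCs
    obtain ⟨a, ha, b, hb, hab⟩ := Set.not_subsingleton_iff.mp hCs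
    -- determine c
    have hcval : c = -1 ∨ c = 0 ∨ c = 1 := by
      rw [← hc a ha]; exact Real.sign_apply_eq _
    -- helper: sign values
    by_cases hsgood : s = -1 ∨ s = 0 ∨ s = 1
    swap
    · have hTe : T = ∅ := by
        ext x
        simp only [hT, Set.mem_setOf_eq, Set.mem_empty_iff_false, iff_false, not_and]
        intro _ hx
        exact hsgood (hx ▸ Real.sign_apply_eq _)
      rw [hTe]
      exact ⟨convex_empty, fun _ => isOpen_empty⟩
    rcases hcval with hc0 | hc0 | hc0
    · -- c = -1 : p strictly anti on C
      have hanti : StrictAntiOn (fun x => p.eval x) C := by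
        apply strictAntiOn_of_deriv_neg hconv (p.continuous.continuousOn)
        intro x hx
        rw [Polynomial.deriv]
        have := hc x (interior_subset hx)
        rw [hc0] at this
        exact real_sign_eq_neg_one_iff.mp this
      rcases hsgood with hs | hs | hs
      · -- s = -1 : p < 0
        have hTeq : T = {x | x ∈ C ∧ p.eval x < 0} := by
          ext x; simp only [hT, Set.mem_setOf_eq, hs, real_sign_eq_neg_one_iff]
        rw [hTeq]
        constructor
        · intro x hx y hy u v hu hv huv
          refine ⟨hconv hx.1 hy.1 hu hv huv, ?_⟩
          have hmem : u • x + v • y ∈ Set.uIcc x y := by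
            rw [← segment_eq_uIcc]
            exact ⟨u, v, hu, hv, huv, rfl⟩
          have h1 : x ⊓ y ≤ u • x + v • y := hmem.1
          have h2 : x ⊓ y ∈ C ∧ p.eval (x ⊓ y) < 0 := by
            rcases le_total x y with h | h
            · rw [inf_eq_left.mpr h]; exact hx
            · rw [inf_eq_right.mpr h]; exact hy
          calc p.eval (u • x + v • y) ≤ p.eval (x ⊓ y) :=
                hanti.antitoneOn h2.1 (hconv hx.1 hy.1 hu hv huv) h1
            _ < 0 := h2.2
        · intro _
          have : {x | x ∈ C ∧ p.eval x < 0} = C ∩ (fun x => p.eval x) ⁻¹' Set.Iio 0 := rfl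
          rw [this]
          exact hCo.inter (isOpen_Iio.preimage p.continuous)
      · -- s = 0 : at most one zero
        have hTs : T.Subsingleton := by
          intro x hx y hy
          have hy0 : p.eval y = 0 := by
            have := hy.2; rw [hs] at this; exact Real.sign_eq_zero_iff.mp this
          have hx0 : p.eval x = 0 := by
            have := hx.2; rw [hs] at this; exact Real.sign_eq_zero_iff.mp this
          exact hanti.injOn hx.1 hy.1 (hx0.trans hy0.symm)
        exact ⟨hTs.convex, fun h => absurd hTs h⟩
      · -- s = 1 : p > 0
        have hTeq : T = {x | x ∈ C ∧ 0 < p.eval x} := by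
          ext x; simp only [hT, Set.mem_setOf_eq, hs, real_sign_eq_one_iff]
        rw [hTeq]
        constructor
        · intro x hx y hy u v hu hv huv
          refine ⟨hconv hx.1 hy.1 hu hv huv, ?_⟩
          have hmem : u • x + v • y ∈ Set.uIcc x y := by
            rw [← segment_eq_uIcc]
            exact ⟨u, v, hu, hv, huv, rfl⟩
          have h1 : u • x + v • y ≤ x ⊔ y := hmem.2
          have h2 : x ⊔ y ∈ C ∧ 0 < p.eval (x ⊔ y) := by
            rcases le_total x y with h | h
            · rw [sup_eq_right.mpr h]; exact hy
            · rw [sup_eq_left.mpr h]; exact hx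
          calc (0:ℝ) < p.eval (x ⊔ y) := h2.2
            _ ≤ p.eval (u • x + v • y) :=
                hanti.antitoneOn (hconv hx.1 hy.1 hu hv huv) h2.1 h1
        · intro _
          have : {x | x ∈ C ∧ 0 < p.eval x} = C ∩ (fun x => p.eval x) ⁻¹' Set.Ioi 0 := rfl
          rw [this]
          exact hCo.inter (isOpen_Ioi.preimage p.continuous)
    · -- c = 0 : derivative vanishes on C, p constant
      have hinf : C.Infinite := by
        apply Set.Infinite.mono (show Set.uIcc a b ⊆ C from by
          rw [← segment_eq_uIcc]; exact hconv.segment_subset ha hb)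
        rw [Set.uIcc]
        exact Set.Icc_infinite (inf_lt_sup.mpr hab)
      have hd0 : p.derivative = 0 := by
        apply Polynomial.eq_zero_of_infinite_isRoot
        apply hinf.mono
        intro x hx
        have := hc x hx
        rw [hc0] at this
        exact Real.sign_eq_zero_iff.mp this
      have hpc : p = Polynomial.C (p.coeff 0) :=
        Polynomial.eq_C_of_natDegree_eq_zero
          (Polynomial.natDegree_eq_zero_of_derivative_eq_zero hd0)
      by_cases hk : Real.sign (p.coeff 0) = s
      · have hTeq : T = C := by
          ext x
          simp only [hT, Set.mem_setOf_eq, and_iff_left_iff_imp]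
          intro _
          rw [hpc]; simpa using hk
        rw [hTeq]
        exact ⟨hconv, fun _ => hCo⟩
      · have hTeq : T = ∅ := by
          ext x
          simp only [hT, Set.mem_setOf_eq, Set.mem_empty_iff_false, iff_false, not_and]
          intro _ hx
          apply hk
          rw [hpc] at hx; simpa using hx
        rw [hTeq]
        exact ⟨convex_empty, fun _ => isOpen_empty⟩
    · -- c = 1 : p strictly mono on C
      have hmono : StrictMonoOn (fun x => p.eval x) C := by
        apply strictMonoOn_of_deriv_pos hconv (p.continuous.continuousOn)
        intro x hx
        rw [Polynomial.deriv]
        have := hc x (interior_subset hx)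
        rw [hc0] at this
        exact real_sign_eq_one_iff.mp this
      rcases hsgood with hs | hs | hs
      · have hTeq : T = {x | x ∈ C ∧ p.eval x < 0} := by
          ext x; simp only [hT, Set.mem_setOf_eq, hs, real_sign_eq_neg_one_iff]
        rw [hTeq]
        constructor
        · intro x hx y hy u v hu hv huv
          refine ⟨hconv hx.1 hy.1 hu hv huv, ?_⟩
          have hmem : u • x + v • y ∈ Set.uIcc x y := by
            rw [← segment_eq_uIcc]
            exact ⟨u, v, hu, hv, huv, rfl⟩
          have h1 : u • x + v • y ≤ x ⊔ y := hmem.2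
          have h2 : x ⊔ y ∈ C ∧ p.eval (x ⊔ y) < 0 := by
            rcases le_total x y with h | h
            · rw [sup_eq_right.mpr h]; exact hy
            · rw [sup_eq_left.mpr h]; exact hx
          calc p.eval (u • x + v • y) ≤ p.eval (x ⊔ y) :=
                hmono.monotoneOn (hconv hx.1 hy.1 hu hv huv) h2.1 h1
            _ < 0 := h2.2
        · intro _
          have : {x | x ∈ C ∧ p.eval x < 0} = C ∩ (fun x => p.eval x) ⁻¹' Set.Iio 0 := rfl
          rw [this]
          exact hCo.inter (isOpen_Iio.preimage p.continuous)
      · have hTs : T.Subsingleton := by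
          intro x hx y hy
          have hx0 : p.eval x = 0 := by
            have := hx.2; rw [hs] at this; exact Real.sign_eq_zero_iff.mp this
          have hy0 : p.eval y = 0 := by
            have := hy.2; rw [hs] at this; exact Real.sign_eq_zero_iff.mp this
          exact hmono.injOn hx.1 hy.1 (hx0.trans hy0.symm)
        exact ⟨hTs.convex, fun h => absurd hTs h⟩
      · have hTeq : T = {x | x ∈ C ∧ 0 < p.eval x} := by
          ext x; simp only [hT, Set.mem_setOf_eq, hs, real_sign_eq_one_iff]
        rw [hTeq]
        constructor
        · intro x hx y hy u v hu hv huv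
          refine ⟨hconv hx.1 hy.1 hu hv huv, ?_⟩
          have hmem : u • x + v • y ∈ Set.uIcc x y := by
            rw [← segment_eq_uIcc]
            exact ⟨u, v, hu, hv, huv, rfl⟩
          have h1 : x ⊓ y ≤ u • x + v • y := hmem.1
          have h2 : x ⊓ y ∈ C ∧ 0 < p.eval (x ⊓ y) := by
            rcases le_total x y with h | h
            · rw [inf_eq_left.mpr h]; exact hx
            · rw [inf_eq_right.mpr h]; exact hy
          calc (0:ℝ) < p.eval (x ⊓ y) := h2.2
            _ ≤ p.eval (u • x + v • y) :=
                hmono.monotoneOn h2.1 (hconv hx.1 hy.1 hu hv huv) h1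
        · intro _
          have : {x | x ∈ C ∧ 0 < p.eval x} = C ∩ (fun x => p.eval x) ⁻¹' Set.Ioi 0 := rfl
          rw [this]
          exact hCo.inter (isOpen_Ioi.preimage p.continuous)

lemma thom_aux : ∀ (n : ℕ) (p : Polynomial ℝ), p.natDegree ≤ n → ∀ (s : ℕ → ℝ),
    Convex ℝ {x : ℝ | ∀ i ≤ n, Real.sign ((Polynomial.derivative^[i] p).eval x) = s i} ∧
    (¬ Set.Subsingleton
        {x : ℝ | ∀ i ≤ n, Real.sign ((Polynomial.derivative^[i] p).eval x) = s i} →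
      IsOpen {x : ℝ | ∀ i ≤ n, Real.sign ((Polynomial.derivative^[i] p).eval x) = s i}) := by
  intro n
  induction n with
  | zero =>
    intro p hp s
    have hpc : p = Polynomial.C (p.coeff 0) := Polynomial.eq_C_of_natDegree_le_zero hp
    by_cases h : Real.sign (p.coeff 0) = s 0
    · have hTeq : {x : ℝ | ∀ i ≤ 0, Real.sign ((Polynomial.derivative^[i] p).eval x) = s i}
          = Set.univ := by
        ext x
        simp only [Set.mem_setOf_eq, Nat.le_zero, forall_eq, Function.iterate_zero, id_eq,
          Set.mem_univ, iff_true]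
        rw [hpc]; simpa using h
      rw [hTeq]
      exact ⟨convex_univ, fun _ => isOpen_univ⟩
    · have hTeq : {x : ℝ | ∀ i ≤ 0, Real.sign ((Polynomial.derivative^[i] p).eval x) = s i}
          = ∅ := by
        ext x
        simp only [Set.mem_setOf_eq, Nat.le_zero, forall_eq, Function.iterate_zero, id_eq,
          Set.mem_empty_iff_false, iff_false]
        rw [hpc]; simpa using h
      rw [hTeq]
      exact ⟨convex_empty, fun _ => isOpen_empty⟩
  | succ n ih =>
    intro p hp s
    obtain ⟨h1, h2⟩ := ih p.derivative
      (le_trans (Polynomial.natDegree_derivative_le p) (by omega)) (fun i => s (i + 1))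
    have hset : {x : ℝ | ∀ i ≤ n + 1, Real.sign ((Polynomial.derivative^[i] p).eval x) = s i}
        = {x | x ∈ {y : ℝ | ∀ i ≤ n,
            Real.sign ((Polynomial.derivative^[i] p.derivative).eval y) = s (i + 1)} ∧
            Real.sign (p.eval x) = s 0} := by
      ext x
      simp only [Set.mem_setOf_eq]
      constructor
      · intro h
        refine ⟨fun i hi => ?_, by simpa using h 0 (by omega)⟩
        have := h (i + 1) (by omega)
        rwa [Function.iterate_succ_apply] at this
      · rintro ⟨hC, h0⟩ i hi
        cases i with
        | zero => simpa using h0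
        | succ j => rw [Function.iterate_succ_apply]; exact hC j (by omega)
    rw [hset]
    exact thom_key _ h1 h2 p (s 1) (s 0) (fun x hx => by simpa using hx 0 (by omega))

theorem thom_lemma_univariate (p : Polynomial ℝ) (d : ℕ) (hd : p.natDegree = d)
    (σ : Fin (d + 1) → ℝ) (hσ : ∀ i, σ i = -1 ∨ σ i = 0 ∨ σ i = 1) :
    let S := {x : ℝ | ∀ i : Fin (d + 1),
      Real.sign ((Polynomial.derivative^[(i : ℕ)] p).eval x) = σ i}
    Convex ℝ S ∧ (¬ S.Subsingleton → IsOpen S) := by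
  intro S
  set s' : ℕ → ℝ := fun i => if h : i < d + 1 then σ ⟨i, h⟩ else 0 with hs'
  have hS : S = {x : ℝ | ∀ i ≤ d, Real.sign ((Polynomial.derivative^[i] p).eval x) = s' i} := by
    ext x
    simp only [S, Set.mem_setOf_eq]
    constructor
    · intro h i hi
      have := h ⟨i, by omega⟩
      rw [hs']
      simpa [dif_pos (show i < d + 1 by omega), hi] using this
    · intro h i
      have := h i.1 (by omega)
      rw [hs'] at this
      simpa [dif_pos i.2, Nat.le_of_lt_succ i.2] using this
  rw [hS]
  exact thom_aux d p (le_of_eq hd) s'
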